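/- For every compact set K ⊆ ℂ ∖ P_λ there is a constant C_p > 0 such that for every n ∈ ℕ, every sequence β_1,…,β_n ∈ Δ̂⁺, and every ħ ∈ K, one has ∏_{j=1}^{n} |p_{iλ/ħ}(β_j + β_{j+1} + ⋯ + β_n)|^{−1} ≤ C_p^n / (n!)². -/

import Mathlib

set_option maxHeartbeats 2000000 in
/-- In the setting of the paper (with `Δ̂⁺` a finite set of nonzero
vectors, each an `ℕ₀`-combination of `α_1,…,α_r` with a nonzero coefficient,
`(ρ, α_i) > 0`, `λ : E → ℂ` `ℝ`-linear, `p_{iλ/ħ}(μ) = ½(μ,μ) − (ρ,μ) − (i/ħ)λ(μ)` and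
`P_λ = {0} ∪ {ħ ≠ 0 : p_{iλ/ħ}(μ) = 0 for some μ ∈ ℕ₀Δ̂⁺ ∖ {0}}`):
for every compact `K ⊆ ℂ ∖ P_λ` there is `C_p > 0` such that for every `n`, every
sequence `β_1,…,β_n ∈ Δ̂⁺` and every `ħ ∈ K`,
`∏_{j=1}^n |p_{iλ/ħ}(β_j + ⋯ + β_n)|⁻¹ ≤ C_p^n / (n!)²`. -/
theorem stmt7 {E : Type} [NormedAddCommGroup E] [InnerProductSpace ℝ E]
    [FiniteDimensional ℝ E]
    {r : ℕ} (α : Fin r → E) (ρ : E) (hρ : ∀ i, 0 < (inner ℝ ρ (α i) : ℝ))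
    (Δhat : Finset E) (hΔ0 : (0 : E) ∉ Δhat)
    (hΔ : ∀ β ∈ Δhat, ∃ c : Fin r → ℕ, (∃ i, c i ≠ 0) ∧ β = ∑ i, (c i : ℝ) • α i)
    (lam : E →ₗ[ℝ] ℂ)
    (p : ℂ → E → ℂ)
    (hp : ∀ hbar μ, p hbar μ = (1/2 : ℂ) * ((inner ℝ μ μ : ℝ) : ℂ) - ((inner ℝ ρ μ : ℝ) : ℂ)
        - (Complex.I / hbar) * lam μ)
    (NΔ : Set E)
    (hNΔ : NΔ = {μ | ∃ c : E → ℕ, μ = ∑ β ∈ Δhat, (c β : ℝ) • β})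
    (P : Set ℂ)
    (hP : P = {0} ∪ {hbar | hbar ≠ 0 ∧ ∃ μ ∈ NΔ, μ ≠ 0 ∧ p hbar μ = 0})
    (K : Set ℂ) (hK : IsCompact K) (hKP : K ∩ P = ∅) :
    ∃ C > (0 : ℝ), ∀ n : ℕ, ∀ β : ℕ → E, (∀ j < n, β j ∈ Δhat) → ∀ hbar ∈ K,
      ∏ j ∈ Finset.range n, ‖p hbar (∑ i ∈ Finset.Ico j n, β i)‖⁻¹
        ≤ C ^ n / ((n.factorial : ℝ)) ^ 2 := by
  classical
  rcases Set.eq_empty_or_nonempty K with hKe | hKne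
  · exact ⟨1, one_pos, fun n β hβ hbar hh => absurd hh (by simp [hKe])⟩
  rcases Finset.eq_empty_or_nonempty Δhat with hDe | hDne
  · refine ⟨1, one_pos, fun n β hβ hbar hh => ?_⟩
    cases n with
    | zero => simp
    | succ n => exact absurd (hβ 0 (Nat.succ_pos n)) (by simp [hDe])
  -- basic facts about K
  have hKnot : ∀ h ∈ K, h ∉ P := fun h hh hp' =>
    Set.eq_empty_iff_forall_notMem.mp hKP h ⟨hh, hp'⟩
  have h0P : (0:ℂ) ∈ P := by rw [hP]; left; rfl
  have hK0 : ∀ h ∈ K, h ≠ 0 := fun h hh he => hKnot h hh (he ▸ h0P)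
  -- δ : lower bound on |h| on K
  obtain ⟨h₀, hh₀K, hmin₀⟩ := hK.exists_isMinOn hKne continuous_norm.continuousOn
  set δ := ‖h₀‖ with hδdef
  have hδpos : 0 < δ := norm_pos_iff.mpr (hK0 h₀ hh₀K)
  have hδle : ∀ h ∈ K, δ ≤ ‖h‖ := fun h hh => hmin₀ hh
  -- positivity of (ρ, β) for β ∈ Δhat
  have hposβ : ∀ β ∈ Δhat, 0 < (inner ℝ ρ β : ℝ) := by
    intro β hβ
    obtain ⟨c, ⟨i0, hi0⟩, rfl⟩ := hΔ β hβ
    rw [inner_sum]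
    apply Finset.sum_pos'
    · intro i _
      rw [real_inner_smul_right]
      exact mul_nonneg (Nat.cast_nonneg _) (hρ i).le
    · refine ⟨i0, Finset.mem_univ _, ?_⟩
      rw [real_inner_smul_right]
      have : 0 < (c i0 : ℝ) := by exact_mod_cast Nat.pos_of_ne_zero hi0
      exact mul_pos this (hρ i0)
  set a := Δhat.inf' hDne (fun β => (inner ℝ ρ β : ℝ)) with hadef
  have hapos : 0 < a := Finset.lt_inf'_iff hDne |>.mpr hposβ
  have hale : ∀ β ∈ Δhat, a ≤ (inner ℝ ρ β : ℝ) := fun β hβ => Finset.inf'_le _ hβ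
  set B := Δhat.sup' hDne (fun β => ‖β‖) with hBdef
  have hBle : ∀ β ∈ Δhat, ‖β‖ ≤ B := fun β hβ => Finset.le_sup' _ hβ
  have hBnonneg : 0 ≤ B := le_trans (norm_nonneg _) (hBle _ hDne.choose_spec)
  have hρ0 : ρ ≠ 0 := by
    intro h
    have := hposβ _ hDne.choose_spec
    rw [h, inner_zero_left] at this
    exact lt_irrefl 0 this
  have hρnorm : 0 < ‖ρ‖ := norm_pos_iff.mpr hρ0
  -- continuous version of lam
  set f := LinearMap.toContinuousLinearMap lam with hfdef
  have hlam : ∀ v : E, ‖lam v‖ ≤ ‖f‖ * ‖v‖ := fun v => by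
    exact f.le_opNorm v
  have hfnonneg : (0:ℝ) ≤ ‖f‖ := norm_nonneg _
  set c := a^2 / (2 * ‖ρ‖^2) with hcdef
  have hcpos : 0 < c := by positivity
  set D := ‖ρ‖ * B + ‖f‖ * B / δ with hDdef
  have hDnonneg : 0 ≤ D := by positivity
  -- key quadratic lower bound
  have key : ∀ (s : Finset ℕ) (β : ℕ → E), (∀ i ∈ s, β i ∈ Δhat) → ∀ h ∈ K,
      c * (s.card:ℝ)^2 - D * (s.card:ℝ) ≤ ‖p h (∑ i ∈ s, β i)‖ := by
    intro s β hβ h hh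
    set μ := ∑ i ∈ s, β i with hμdef
    set m := (s.card : ℝ) with hmdef
    have hmnonneg : 0 ≤ m := Nat.cast_nonneg _
    have hρμ : a * m ≤ (inner ℝ ρ μ : ℝ) := by
      have := Finset.card_nsmul_le_sum s (fun i => (inner ℝ ρ (β i) : ℝ)) a
        (fun i hi => hale _ (hβ i hi))
      rw [hμdef, inner_sum]
      calc a * m = s.card • a := by rw [nsmul_eq_mul, hmdef]; ring
      _ ≤ _ := this
    have hρμ0 : 0 ≤ (inner ℝ ρ μ : ℝ) := le_trans (by positivity) hρμ
    have hnormμ : ‖μ‖ ≤ B * m := by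
      calc ‖μ‖ ≤ ∑ i ∈ s, ‖β i‖ := norm_sum_le _ _
      _ ≤ s.card • B := Finset.sum_le_card_nsmul _ _ _ (fun i hi => hBle _ (hβ i hi))
      _ = B * m := by rw [nsmul_eq_mul, hmdef]; ring
    have hCS : (inner ℝ ρ μ : ℝ) ≤ ‖ρ‖ * ‖μ‖ := real_inner_le_norm ρ μ
    have hinner : (a * m)^2 / ‖ρ‖^2 ≤ (inner ℝ μ μ : ℝ) := by
      rw [real_inner_self_eq_norm_sq]
      rw [div_le_iff₀ (by positivity)]
      have h1 : a * m ≤ ‖ρ‖ * ‖μ‖ := le_trans hρμ hCS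
      nlinarith [norm_nonneg μ, mul_nonneg hapos.le hmnonneg]
    have hρμub : (inner ℝ ρ μ : ℝ) ≤ ‖ρ‖ * (B * m) :=
      le_trans hCS (mul_le_mul_of_nonneg_left hnormμ (norm_nonneg ρ))
    have hlamμ : ‖lam μ‖ ≤ ‖f‖ * (B * m) :=
      le_trans (hlam μ) (mul_le_mul_of_nonneg_left hnormμ hfnonneg)
    have hhabs : δ ≤ ‖h‖ := hδle h hh
    have hh0 : ‖h‖ ≠ 0 := ne_of_gt (lt_of_lt_of_le hδpos hhabs)
    -- |I/h * lam μ| ≤ ‖f‖ B m / δ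
    have hz : ‖(Complex.I / h) * lam μ‖ ≤ ‖f‖ * B * m / δ := by
      rw [norm_mul, norm_div, Complex.norm_I]
      rw [one_div]
      calc (‖h‖)⁻¹ * ‖lam μ‖ ≤ δ⁻¹ * (‖f‖ * (B * m)) := by
            apply mul_le_mul _ hlamμ (norm_nonneg _) (by positivity)
            exact inv_anti₀ hδpos hhabs
      _ = ‖f‖ * B * m / δ := by field_simp
    -- lower bound via triangle ineq
    rw [hp]
    set x : ℂ := (1/2 : ℂ) * ((inner ℝ μ μ : ℝ) : ℂ) with hxdef
    set y : ℂ := ((inner ℝ ρ μ : ℝ) : ℂ) with hydef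
    set z : ℂ := (Complex.I / h) * lam μ with hzdef
    have htri : ‖x‖ - ‖y‖ - ‖z‖ ≤ ‖x - y - z‖ := by
      calc ‖x‖ - ‖y‖ - ‖z‖ ≤ ‖x - y‖ - ‖z‖ :=
            sub_le_sub_right (norm_sub_norm_le x y) _
        _ ≤ ‖x - y - z‖ := norm_sub_norm_le _ _
    have hxabs : ‖x‖ = (inner ℝ μ μ : ℝ) / 2 := by
      rw [hxdef, norm_mul]
      rw [Complex.norm_real, Real.norm_eq_abs, abs_of_nonneg (real_inner_self_nonneg)]
      rw [norm_div, norm_one, Complex.norm_two]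
      ring
    have hyabs : ‖y‖ = (inner ℝ ρ μ : ℝ) := by
      rw [hydef, Complex.norm_real, Real.norm_eq_abs, abs_of_nonneg hρμ0]
    refine le_trans ?_ htri
    rw [hxabs, hyabs]
    have hμμ : (a*m)^2/‖ρ‖^2 ≤ (inner ℝ μ μ : ℝ) := hinner
    have : c * m^2 ≤ (inner ℝ μ μ : ℝ)/2 := by
      rw [hcdef]
      calc a^2/(2*‖ρ‖^2) * m^2 = (a*m)^2/‖ρ‖^2/2 := by ring
        _ ≤ (inner ℝ μ μ : ℝ)/2 := by linarith
    have hDm : ‖y‖ + ‖z‖ ≤ D * m := by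
      rw [hyabs, hDdef]
      calc (inner ℝ ρ μ : ℝ) + ‖z‖ ≤ ‖ρ‖*(B*m) + ‖f‖*B*m/δ :=
            add_le_add hρμub hz
        _ = (‖ρ‖*B + ‖f‖*B/δ)*m := by field_simp
    rw [hyabs] at hDm
    set I2 : ℝ := (inner ℝ μ μ : ℝ) with hI2
    set Y : ℝ := (inner ℝ ρ μ : ℝ) with hY
    set Z : ℝ := ‖z‖ with hZ
    clear_value I2 Y Z δ a B f c D m x y z
    linarith
  clear_value δ a B f c D
  -- choose M
  obtain ⟨M, hM⟩ := exists_nat_ge (2 * D / c)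
  have hMbig : ∀ m : ℕ, M + 1 ≤ m → c/2 * (m:ℝ)^2 ≤ c * (m:ℝ)^2 - D * (m:ℝ) := by
    intro m hm
    have h1 : (M:ℝ) + 1 ≤ (m:ℝ) := by exact_mod_cast hm
    have h2 : D ≤ c * (m:ℝ) / 2 := by
      rw [div_le_iff₀ hcpos] at hM
      have h3 : (M:ℝ) * c ≤ (m:ℝ) * c :=
        mul_le_mul_of_nonneg_right (by linarith) hcpos.le
      linarith
    have h4 : D * (m:ℝ) ≤ (c * (m:ℝ) / 2) * (m:ℝ) :=
      mul_le_mul_of_nonneg_right h2 (by positivity)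
    have h5 : (c * (m:ℝ) / 2) * (m:ℝ) = c/2 * (m:ℝ)^2 := by ring
    rw [h5] at h4
    linarith
  -- the finite set of small sums
  set S : Finset E := (Finset.range (M+1)).biUnion (fun k =>
    (Fintype.piFinset fun _ : Fin (k+1) => Δhat).image (fun f => ∑ i, f i)) with hSdef
  have hmemS : ∀ (s : Finset ℕ) (β : ℕ → E), s.Nonempty → s.card ≤ M + 1 →
      (∀ i ∈ s, β i ∈ Δhat) → (∑ i ∈ s, β i) ∈ S := by
    intro s β hsne hscard hβ
    have hcard : s.card = (s.card - 1) + 1 := (Nat.succ_pred_eq_of_pos (Finset.card_pos.mpr hsne)).symm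
    set k := s.card - 1 with hkdef
    have hk : k < M + 1 := by omega
    rw [hSdef, Finset.mem_biUnion]
    refine ⟨k, Finset.mem_range.mpr hk, ?_⟩
    rw [Finset.mem_image]
    set e := s.orderIsoOfFin hcard with hedef
    refine ⟨fun i => β (e i), ?_, ?_⟩
    · rw [Fintype.mem_piFinset]
      intro i
      exact hβ _ (e i).2
    · calc (∑ i, β ((e i : ℕ))) = ∑ x : {x // x ∈ s}, β x := Equiv.sum_comp e.toEquiv (fun x => β x)
        _ = ∑ i ∈ s, β i := Finset.sum_coe_sort s β
  -- members of S lie in NΔ and are nonzero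
  have hSprop : ∀ μ ∈ S, μ ∈ NΔ ∧ μ ≠ 0 := by
    intro μ hμ
    rw [hSdef, Finset.mem_biUnion] at hμ
    obtain ⟨k, -, hμ⟩ := hμ
    rw [Finset.mem_image] at hμ
    obtain ⟨g, hg, rfl⟩ := hμ
    rw [Fintype.mem_piFinset] at hg
    constructor
    · rw [hNΔ]
      refine ⟨fun γ => (Finset.univ.filter fun i => g i = γ).card, ?_⟩
      have := Finset.sum_fiberwise_of_maps_to (s := (Finset.univ : Finset (Fin (k+1)))) (t := Δhat) (g := g) (fun i _ => hg i) g
      rw [← this]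
      refine Finset.sum_congr rfl fun γ _ => ?_
      rw [Nat.cast_smul_eq_nsmul]
      rw [Finset.sum_congr rfl (fun i hi => (Finset.mem_filter.mp hi).2), Finset.sum_const]
    · intro h0
      have hpos : 0 < (inner ℝ ρ (∑ i, g i) : ℝ) := by
        rw [inner_sum]
        exact Finset.sum_pos (fun i _ => hposβ _ (hg i)) Finset.univ_nonempty
      rw [h0, inner_zero_right] at hpos
      exact lt_irrefl 0 hpos
  have hSne : S.Nonempty := by
    obtain ⟨β₀, hβ₀⟩ := hDne
    exact ⟨β₀, by simpa using hmemS {0} (fun _ => β₀) ⟨0, by simp⟩ (by simp) (fun i _ => hβ₀)⟩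
  -- epsilon: min of |p h μ| over K × S
  have hScomp : IsCompact (↑S : Set E) := S.finite_toSet.isCompact
  have hprodc : IsCompact (K ×ˢ (↑S : Set E)) := hK.prod hScomp
  have hprodne : (K ×ˢ (↑S : Set E)).Nonempty := hKne.prod hSne.to_set
  have hcont : ContinuousOn (fun q : ℂ × E => ‖p q.1 q.2‖) (K ×ˢ (↑S : Set E)) := by
    have heq : ∀ q ∈ K ×ˢ (↑S : Set E), ‖p q.1 q.2‖ =
        ‖(1/2 : ℂ) * ((inner ℝ q.2 q.2 : ℝ) : ℂ) - ((inner ℝ ρ q.2 : ℝ) : ℂ)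
          - (Complex.I / q.1) * lam q.2‖ := fun q _ => by rw [hp]
    refine ContinuousOn.congr ?_ heq
    apply continuous_norm.comp_continuousOn
    apply ContinuousOn.sub
    · apply Continuous.continuousOn
      apply Continuous.sub
      · exact continuous_const.mul (Complex.continuous_ofReal.comp
          ((continuous_snd.inner continuous_snd)))
      · exact Complex.continuous_ofReal.comp (continuous_const.inner continuous_snd)
    · apply ContinuousOn.mul
      · apply ContinuousOn.div continuousOn_const continuous_fst.continuousOn
        intro q hq
        exact hK0 q.1 (Set.mem_prod.mp hq).1
      · exact (lam.continuous_of_finiteDimensional.comp continuous_snd).continuousOn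
  obtain ⟨q₁, hq₁, hq₁min⟩ := hprodc.exists_isMinOn hprodne hcont
  set ε := ‖p q₁.1 q₁.2‖ with hεdef
  have hεpos : 0 < ε := by
    rw [hεdef]
    apply norm_pos_iff.mpr
    intro hp0
    obtain ⟨hq1K, hq2S⟩ := Set.mem_prod.mp hq₁
    obtain ⟨hNmem, hne⟩ := hSprop q₁.2 hq2S
    apply hKnot q₁.1 hq1K
    rw [hP]
    right
    exact ⟨hK0 q₁.1 hq1K, q₁.2, hNmem, hne, hp0⟩
  have hεle : ∀ h ∈ K, ∀ μ ∈ S, ε ≤ ‖p h μ‖ := by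
    intro h hh μ hμ
    exact isMinOn_iff.mp hq₁min (h, μ) (Set.mem_prod.mpr ⟨hh, hμ⟩)
  clear_value S
  clear_value ε
  -- the constant
  set C := max (2/c) (((M:ℝ)+1)^2/ε) with hCdef
  have hCpos : 0 < C := lt_max_of_lt_left (by positivity)
  have hCmax1 : 2/c ≤ C := le_max_left _ _
  have hCmax2 : ((M:ℝ)+1)^2/ε ≤ C := le_max_right _ _
  clear_value C
  -- per-term bound
  have hterm : ∀ (s : Finset ℕ) (β : ℕ → E), s.Nonempty → (∀ i ∈ s, β i ∈ Δhat) →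
      ∀ h ∈ K, (‖p h (∑ i ∈ s, β i)‖)⁻¹ ≤ C / (s.card:ℝ)^2 := by
    intro s β hsne hβ h hh
    have hm1 : 1 ≤ s.card := Finset.card_pos.mpr hsne
    have hmpos : (0:ℝ) < (s.card:ℝ) := by exact_mod_cast hm1
    by_cases hm : M + 1 ≤ s.card
    · have hb := key s β hβ h hh
      have h2 : c/2 * (s.card:ℝ)^2 ≤ ‖p h (∑ i ∈ s, β i)‖ :=
        le_trans (hMbig s.card hm) hb
      have hpos2 : 0 < c/2 * (s.card:ℝ)^2 := by positivity
      calc (‖p h (∑ i ∈ s, β i)‖)⁻¹ ≤ (c/2 * (s.card:ℝ)^2)⁻¹ :=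
            inv_anti₀ hpos2 h2
        _ = (2/c) / (s.card:ℝ)^2 := by
            field_simp
        _ ≤ C / (s.card:ℝ)^2 := by
            gcongr
    · push_neg at hm
      have hmle : s.card ≤ M + 1 := by omega
      have hμS : (∑ i ∈ s, β i) ∈ S := hmemS s β hsne hmle hβ
      have h2 : ε ≤ ‖p h (∑ i ∈ s, β i)‖ := hεle h hh _ hμS
      calc (‖p h (∑ i ∈ s, β i)‖)⁻¹ ≤ ε⁻¹ := inv_anti₀ hεpos h2
        _ ≤ (((M:ℝ)+1)^2/ε) / (s.card:ℝ)^2 := by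
            have hcard : (s.card:ℝ) ≤ (M:ℝ)+1 := by exact_mod_cast hmle
            have h5 : (s.card:ℝ)^2 ≤ ((M:ℝ)+1)^2 := by nlinarith
            have h6 : ε * (s.card:ℝ)^2 ≤ ε * ((M:ℝ)+1)^2 :=
              mul_le_mul_of_nonneg_left h5 hεpos.le
            rw [div_div, inv_eq_one_div, div_le_div_iff₀ hεpos (by positivity)]
            nlinarith
        _ ≤ C / (s.card:ℝ)^2 := by
            gcongr
  -- factorial identity
  have hfactaux : ∀ n : ℕ, ∏ j ∈ Finset.range n, (n - j) = n.factorial := by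
    intro n
    induction n with
    | zero => simp
    | succ n ih =>
        rw [Finset.prod_range_succ' (fun j => n + 1 - j) n]
        simp only [Nat.succ_sub_succ, Nat.sub_zero]
        rw [ih, Nat.factorial_succ, Nat.mul_comm]
  refine ⟨C, hCpos, ?_⟩
  intro n β hβ h hh
  calc ∏ j ∈ Finset.range n, (‖p h (∑ i ∈ Finset.Ico j n, β i)‖)⁻¹
      ≤ ∏ j ∈ Finset.range n, C / (((n - j : ℕ)):ℝ)^2 := by
        apply Finset.prod_le_prod
        · intro j _
          positivity
        · intro j hj
          have hjn : j < n := Finset.mem_range.mp hj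
          have := hterm (Finset.Ico j n) β (Finset.nonempty_Ico.mpr hjn)
            (fun i hi => hβ i (Finset.mem_Ico.mp hi).2) h hh
          rwa [Nat.card_Ico] at this
    _ = C ^ n / ((n.factorial : ℝ)) ^ 2 := by
        rw [Finset.prod_div_distrib, Finset.prod_const, Finset.card_range,
          Finset.prod_pow]
        congr 2
        rw [← Nat.cast_prod, hfactaux]
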